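/- Let Q₁, Q₂ be quandles with Q₁ faithful, and let f : Q₁ → Q₂ be an injective quandle homomorphism. Then there is a well-defined surjective group homomorphism π : Inn(Q₂, f(Q₁)) → Inn(Q₁) with π(s_{f(x)}) = s_x for all x ∈ Q₁, and the restriction of π to the set {s_{f(x)} : x ∈ Q₁} is a bijection onto {s_x : x ∈ Q₁}. -/

import Mathlib

/-- A quandle structure on a type `Q`. -/
structure QuandleStr (Q : Type*) where
  s : Q → Q → Q
  fix : ∀ x, s x x = x
  bij : ∀ x, Function.Bijective (s x)
  dist : ∀ x y z, s x (s y z) = s (s x y) (s x z)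

/-- The symmetry at a point, as a permutation of `Q`. -/
noncomputable def QuandleStr.sym {Q : Type*} (q : QuandleStr Q) (x : Q) : Equiv.Perm Q :=
  Equiv.ofBijective (q.s x) (q.bij x)

/-- The inner automorphism group of a quandle. -/
noncomputable def QuandleStr.inn {Q : Type*} (q : QuandleStr Q) : Subgroup (Equiv.Perm Q) :=
  Subgroup.closure (Set.range q.sym)

/-- The subgroup Inn(Q, Q') generated by the symmetries at points of a subset Q'. -/
noncomputable def QuandleStr.innRel {Q : Type*} (q : QuandleStr Q) (Q' : Set Q) :
    Subgroup (Equiv.Perm Q) :=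
  Subgroup.closure (q.sym '' Q')

theorem QuandleStr.sym_mem_innRel {Q : Type*} (q : QuandleStr Q) {Q' : Set Q} {x : Q}
    (hx : x ∈ Q') : q.sym x ∈ q.innRel Q' :=
  Subgroup.subset_closure ⟨x, hx, rfl⟩

/-- Given `Q₁` faithful and an injective quandle homomorphism `f : Q₁ → Q₂`, there is a
well-defined surjective group homomorphism `π : Inn(Q₂, f(Q₁)) → Inn(Q₁)` with
`π(s_{f x}) = s_x`, restricting to a bijection between the sets of symmetries. -/
theorem inn_functor_inj {Q₁ Q₂ : Type*} (q₁ : QuandleStr Q₁) (q₂ : QuandleStr Q₂)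
    (hfaithful : ∀ x y : Q₁, q₁.s x = q₁.s y → x = y)
    (f : Q₁ → Q₂) (hf : Function.Injective f)
    (hhom : ∀ x y : Q₁, f (q₁.s x y) = q₂.s (f x) (f y)) :
    ∃ π : q₂.innRel (Set.range f) →* q₁.inn,
      (∀ x : Q₁,
        (π ⟨q₂.sym (f x), q₂.sym_mem_innRel (Set.mem_range_self x)⟩ : Equiv.Perm Q₁)
          = q₁.sym x) ∧
      Function.Surjective π ∧
      Set.BijOn (fun g : q₂.innRel (Set.range f) => ((π g : q₁.inn) : Equiv.Perm Q₁))
        {g : q₂.innRel (Set.range f) | (g : Equiv.Perm Q₂) ∈ q₂.sym '' Set.range f}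
        (Set.range q₁.sym) := by
  classical
  have hcomp : ∀ x y : Q₁, q₂.sym (f x) (f y) = f (q₁.sym x y) := fun x y => (hhom x y).symm
  -- existence of compatible inner automorphism
  have hex : ∀ g ∈ q₂.innRel (Set.range f), ∃ h : Equiv.Perm Q₁,
      h ∈ q₁.inn ∧ ∀ x, g (f x) = f (h x) := by
    intro g hg
    induction hg using Subgroup.closure_induction with
    | mem g hg =>
      obtain ⟨y, ⟨x, rfl⟩, rfl⟩ := hg
      exact ⟨q₁.sym x, Subgroup.subset_closure ⟨x, rfl⟩, fun z => hcomp x z⟩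
    | one => exact ⟨1, one_mem _, fun x => rfl⟩
    | mul a b ha hb iha ihb =>
      obtain ⟨h₁, h₁m, h₁e⟩ := iha
      obtain ⟨h₂, h₂m, h₂e⟩ := ihb
      exact ⟨h₁ * h₂, mul_mem h₁m h₂m, fun x => by
        simp only [Equiv.Perm.mul_apply, h₂e, h₁e]⟩
    | inv a ha iha =>
      obtain ⟨h, hm, he⟩ := iha
      refine ⟨h⁻¹, inv_mem hm, fun x => ?_⟩
      have := he (h⁻¹ x)
      rw [Equiv.Perm.coe_inv, Equiv.apply_symm_apply] at this
      rw [← this, Equiv.Perm.coe_inv, Equiv.symm_apply_apply, Equiv.Perm.coe_inv]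
  have huniq : ∀ (g : Equiv.Perm Q₂) (h h' : Equiv.Perm Q₁),
      (∀ x, g (f x) = f (h x)) → (∀ x, g (f x) = f (h' x)) → h = h' := by
    intro g h h' H H'
    exact Equiv.ext fun x => hf (by rw [← H, H'])
  set F : q₂.innRel (Set.range f) → q₁.inn :=
    fun g => ⟨(hex g g.2).choose, (hex g g.2).choose_spec.1⟩ with hF
  have hFspec : ∀ g : q₂.innRel (Set.range f), ∀ x, (g : Equiv.Perm Q₂) (f x) = f ((F g : Equiv.Perm Q₁) x) :=
    fun g => (hex g g.2).choose_spec.2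
  have hFuniq : ∀ (g : q₂.innRel (Set.range f)) (h : Equiv.Perm Q₁),
      (∀ x, (g : Equiv.Perm Q₂) (f x) = f (h x)) → (F g : Equiv.Perm Q₁) = h :=
    fun g h hh => huniq g _ _ (hFspec g) hh
  refine ⟨{ toFun := F
            map_one' := ?_
            map_mul' := ?_ }, ?_, ?_, ?_⟩
  · exact Subtype.ext (hFuniq 1 1 fun x => rfl)
  · intro a b
    refine Subtype.ext (hFuniq (a * b) (F a * F b) fun x => ?_)
    rw [Subgroup.coe_mul, Equiv.Perm.mul_apply, hFspec b x, hFspec a, Equiv.Perm.mul_apply]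
  · intro x
    exact hFuniq _ (q₁.sym x) fun z => hcomp x z
  · -- surjectivity
    rintro ⟨h, hh⟩
    induction hh using Subgroup.closure_induction with
    | mem h hmem =>
      obtain ⟨x, rfl⟩ := hmem
      exact ⟨⟨q₂.sym (f x), q₂.sym_mem_innRel (Set.mem_range_self x)⟩,
        Subtype.ext (hFuniq _ (q₁.sym x) fun z => hcomp x z)⟩
    | one => exact ⟨1, Subtype.ext (hFuniq 1 1 fun x => rfl)⟩
    | mul a b ha hb iha ihb =>
      obtain ⟨ga, hga⟩ := iha
      obtain ⟨gb, hgb⟩ := ihb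
      refine ⟨ga * gb, Subtype.ext (hFuniq (ga * gb) (a * b) fun x => ?_)⟩
      have ea : (F ga : Equiv.Perm Q₁) = a := congrArg Subtype.val hga
      have eb : (F gb : Equiv.Perm Q₁) = b := congrArg Subtype.val hgb
      rw [Subgroup.coe_mul, Equiv.Perm.mul_apply, hFspec gb x, eb, hFspec ga, ea,
        Equiv.Perm.mul_apply]
    | inv a ha iha =>
      obtain ⟨g, hg⟩ := iha
      refine ⟨g⁻¹, Subtype.ext (hFuniq g⁻¹ a⁻¹ fun x => ?_)⟩
      have h1 : (F g : Equiv.Perm Q₁) = a := congrArg Subtype.val hg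
      have h2 := hFspec g (a⁻¹ x)
      rw [h1, Equiv.Perm.coe_inv, Equiv.apply_symm_apply] at h2
      rw [InvMemClass.coe_inv, ← h2, Equiv.Perm.coe_inv, Equiv.symm_apply_apply, Equiv.Perm.coe_inv]
  · constructor
    · rintro g ⟨y, ⟨x, rfl⟩, hgy⟩
      exact ⟨x, (hFuniq g (q₁.sym x) fun z => by rw [← hgy, hcomp]).symm⟩
    constructor
    · rintro g₁ hg₁ g₂ hg₂ heq
      obtain ⟨y₁, ⟨x₁, rfl⟩, h₁⟩ := hg₁
      obtain ⟨y₂, ⟨x₂, rfl⟩, h₂⟩ := hg₂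
      have e₁ : (F g₁ : Equiv.Perm Q₁) = q₁.sym x₁ :=
        hFuniq g₁ (q₁.sym x₁) fun z => by rw [← h₁, hcomp]
      have e₂ : (F g₂ : Equiv.Perm Q₁) = q₁.sym x₂ :=
        hFuniq g₂ (q₁.sym x₂) fun z => by rw [← h₂, hcomp]
      have : q₁.sym x₁ = q₁.sym x₂ := by rw [← e₁, ← e₂]; exact heq
      have hx : x₁ = x₂ := hfaithful x₁ x₂ (congrArg (fun e : Equiv.Perm Q₁ => (e : Q₁ → Q₁)) this)
      apply Subtype.ext
      rw [← h₁, ← h₂, hx]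
    · rintro h ⟨x, rfl⟩
      refine ⟨⟨q₂.sym (f x), q₂.sym_mem_innRel (Set.mem_range_self x)⟩,
        ⟨f x, ⟨x, rfl⟩, rfl⟩, ?_⟩
      exact hFuniq _ (q₁.sym x) fun z => hcomp x z
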